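/- Define weights w_Q on a nested family Δ of cubes by the martingale rule: w_Q(Q) = diam(Q), and if Q' ∈ Δ with Q' ⊆ Q decomposes as Q' = R_{Q'} ∪ (∪_i Q'^i), set w_Q(Q'^i) = (w_Q(Q')/s') diam(Q'^i) and distribute mass w_Q(Q')·H¹(R_{Q'})/s' uniformly over R_{Q'}, where s' = H¹(R_{Q'}) + Σ_i diam(Q'^i). If for every Q' one has s' ≥ diam(Q')(1 + c₀ m^{-M}), then for any chain Q_N ⊆ Q_{N-1} ⊆ … ⊆ Q_1 of cubes, w_{Q_1}(Q_N)/diam(Q_N) ≤ q^{N-1} where q = 1/(1 + c₀ m^{-M}). Consequently Σ_{n ≥ 0} q^n ≤ 1 + m^M/c₀. -/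

import Mathlib

theorem stmt_13 (c₀ : ℝ) (hc₀ : 0 < c₀) (hc₀1 : c₀ < 1)
    (m : ℕ) (hm : 2 ≤ m) (M : ℕ)
    (D s w : ℕ → ℝ)
    (hD : ∀ k, 0 < D k) (hs : ∀ k, 0 < s k)
    (hw0 : w 0 = D 0)
    (hrec : ∀ k, w (k + 1) = w k / s k * D (k + 1))
    (hlow : ∀ k, D k * (1 + c₀ * (m : ℝ) ^ (-(M : ℤ))) ≤ s k) :
    (∀ n : ℕ, w n / D n ≤ (1 / (1 + c₀ * (m : ℝ) ^ (-(M : ℤ)))) ^ n) ∧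
    (∑' n : ℕ, (1 / (1 + c₀ * (m : ℝ) ^ (-(M : ℤ)))) ^ n)
      ≤ 1 + (m : ℝ) ^ (M : ℕ) / c₀ := by
  have hmpos : (0:ℝ) < (m:ℝ) ^ (-(M:ℤ)) := by positivity
  set ε : ℝ := c₀ * (m : ℝ) ^ (-(M : ℤ)) with hε
  have hεpos : 0 < ε := by positivity
  have h1ε : (1:ℝ) < 1 + ε := by linarith
  set q : ℝ := 1 / (1 + ε) with hq
  have hq0 : 0 < q := by positivity
  have hq1 : q < 1 := by
    rw [hq, div_lt_one (by linarith)]; linarith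
  have hwpos : ∀ n, 0 < w n := by
    intro n; induction n with
    | zero => rw [hw0]; exact hD 0
    | succ k ih => rw [hrec k]; exact mul_pos (div_pos ih (hs k)) (hD (k+1))
  constructor
  · intro n; induction n with
    | zero => simp [hw0, div_self (hD 0).ne']
    | succ k ih =>
      rw [hrec k, pow_succ]
      have hDk := hD k
      have hDk1 := hD (k+1)
      have hsk := hs k
      have h1 : w k / s k * D (k+1) / D (k+1) = w k / s k := by
        field_simp
      rw [h1]
      have h2 : w k / s k ≤ w k / D k * q := by
        rw [hq, div_mul_div_comm, mul_one]
        apply div_le_div_of_nonneg_left (hwpos k).le (by positivity)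
        calc s k ≥ D k * (1 + ε) := hlow k
          _ = D k * (1 + ε) := rfl
      calc w k / s k ≤ w k / D k * q := h2
        _ ≤ q ^ k * q := by
            apply mul_le_mul_of_nonneg_right ih hq0.le
  · have hsum : ∑' n : ℕ, q ^ n = (1 - q)⁻¹ :=
      tsum_geometric_of_lt_one hq0.le hq1
    rw [hsum]
    have h1q : 1 - q = ε / (1 + ε) := by
      rw [hq]; field_simp; ring
    rw [h1q]
    have : (ε / (1 + ε))⁻¹ = (1 + ε) / ε := by
      rw [inv_div]
    rw [this]
    have hεeq : (1 + ε) / ε = 1 + 1 / ε := by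
      field_simp; ring
    rw [hεeq]
    have : 1 / ε = (m:ℝ) ^ (M:ℕ) / c₀ := by
      rw [hε]
      rw [zpow_neg, zpow_natCast]
      field_simp
    rw [this]
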